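/- Let Z, Z' be as above and suppose {F_1,…,F_p} is a good set of minimal separators of the point P_i of multiplicity m_i. Then for every t ∈ ℕ², dim_k (I_{Z'}/I_Z)_t = #{ i ∈ {1,…,p} : deg F_i ⪯ t }, where ⪯ is the componentwise partial order on ℕ². -/

import Mathlib

/-!
Formalization of statements from "Separators of fat points in ℙⁿ×ℙᵐ"
(Guardo–Van Tuyl).  The bigraded coordinate ring `R = k[x₀,…,xₙ,y₀,…,y_m]` of
`ℙⁿ×ℙᵐ` is modelled as `MvPolynomial (Fin (n+1) ⊕ Fin (m+1)) k`, where the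
variable `X (Sum.inl i)` is `xᵢ` (degree `(1,0)`) and `X (Sum.inr j)` is `yⱼ`
(degree `(0,1)`); bihomogeneity is weighted homogeneity for the weight `biWeight`.
-/

open MvPolynomial

noncomputable section

/-- The ℕ²-graded coordinate ring `R` of `ℙⁿ×ℙᵐ`. -/
abbrev BiRing (k : Type) [Field k] (n m : ℕ) : Type :=
  MvPolynomial (Fin (n + 1) ⊕ Fin (m + 1)) k

/-- The weight function on the variables giving the ℕ²-grading:
`deg xᵢ = (1,0)` and `deg yⱼ = (0,1)`. -/
def biWeight (n m : ℕ) : Fin (n + 1) ⊕ Fin (m + 1) → ℕ × ℕ :=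
  Sum.elim (fun _ => (1, 0)) (fun _ => (0, 1))

variable {k : Type} [Field k] {n m : ℕ}

/-- `F` is bihomogeneous of degree `d ∈ ℕ²`. -/
def BihomOfDeg (F : BiRing k n m) (d : ℕ × ℕ) : Prop :=
  IsWeightedHomogeneous (biWeight n m) F d

/-- `I` is the defining (prime) ideal of a point of `ℙⁿ×ℙᵐ`: it is generated by
`n` linear forms of degree `(1,0)` and `m` linear forms of degree `(0,1)` which
are linearly independent (so that they cut out a single point of `ℙⁿ×ℙᵐ`). -/
def IsPointIdeal (I : Ideal (BiRing k n m)) : Prop :=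
  ∃ (L : Fin n → BiRing k n m) (L' : Fin m → BiRing k n m),
    (∀ a, BihomOfDeg (L a) (1, 0)) ∧ (∀ b, BihomOfDeg (L' b) (0, 1)) ∧
    LinearIndependent k (Sum.elim L L') ∧
    I = Ideal.span (Set.range L ∪ Set.range L')

/-- The defining ideal `I_Z = I_{P₁}^{m₁} ∩ ⋯ ∩ I_{P_s}^{m_s}` of the fat point
scheme `Z = m₁P₁ + ⋯ + m_sP_s`. -/
def fatIdeal {s : ℕ} (P : Fin s → Ideal (BiRing k n m)) (mult : Fin s → ℕ) :
    Ideal (BiRing k n m) :=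
  ⨅ j, P j ^ mult j

/-- `F` is a separator of the point `Pᵢ` of multiplicity `mᵢ`, where `IZ = I_Z`
and `IZ' = I_{Z'}`: a bihomogeneous form lying in `I_{Z'} \ I_Z`
(equivalently `F ∈ I_{Pᵢ}^{mᵢ-1} \ I_{Pᵢ}^{mᵢ}` and `F ∈ I_{Pⱼ}^{mⱼ}` for `j ≠ i`). -/
def IsSeparator (IZ IZ' : Ideal (BiRing k n m)) (F : BiRing k n m) : Prop :=
  (∃ d, BihomOfDeg F d) ∧ F ∈ IZ' ∧ F ∉ IZ

/-- `F₁,…,F_p` is a set of minimal separators of `Pᵢ` of multiplicity `mᵢ`: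
each `Fⱼ` is a (bihomogeneous) separator, their residue classes generate the
ideal `I_{Z'}/I_Z` of `R/I_Z` (equivalently `I_Z + (F₁,…,F_p) = I_{Z'}`), and no
fewer than `p` bihomogeneous forms have classes generating `I_{Z'}/I_Z`. -/
def IsMinSepSet (IZ IZ' : Ideal (BiRing k n m)) {p : ℕ}
    (F : Fin p → BiRing k n m) : Prop :=
  (∀ j, IsSeparator IZ IZ' (F j)) ∧
  IZ ⊔ Ideal.span (Set.range F) = IZ' ∧
  ∀ q : ℕ, q < p → ∀ G : Fin q → BiRing k n m,
    (∀ j, ∃ d, BihomOfDeg (G j) d) → IZ ⊔ Ideal.span (Set.range G) ≠ IZ'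

/-- A family `F₁,…,F_p` of forms with `deg Fⱼ = d j` is a *good* set (of minimal
separators) if for every `t ∈ ℕ²` the classes of `x₀^{t₁-dⱼ₁} y₀^{t₂-dⱼ₂} Fⱼ`
(over those `j` with `d j ⪯ t` componentwise) are linearly independent in
`(I_{Z'}/I_Z)_t`; i.e. any `k`-linear combination lying in `I_Z` has all its
coefficients equal to zero. -/
def IsGoodSepSet {p : ℕ} (IZ : Ideal (BiRing k n m)) (F : Fin p → BiRing k n m)
    (d : Fin p → ℕ × ℕ) : Prop :=
  ∀ t : ℕ × ℕ, ∀ c : Fin p → k,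
    (∑ j ∈ Finset.univ.filter (fun j => (d j).1 ≤ t.1 ∧ (d j).2 ≤ t.2),
        c j • (X (Sum.inl 0) ^ (t.1 - (d j).1) * X (Sum.inr 0) ^ (t.2 - (d j).2) * F j))
      ∈ IZ →
    ∀ j : Fin p, (d j).1 ≤ t.1 → (d j).2 ≤ t.2 → c j = 0

section Aux

open Finsupp

variable {k : Type} [Field k] {n m : ℕ}

instance : GradedAlgebra (weightedHomogeneousSubmodule k (biWeight n m)) :=
  weightedGradedAlgebra k (biWeight n m)

lemma weight_coords (α : (Fin (n + 1) ⊕ Fin (m + 1)) →₀ ℕ) :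
    Finsupp.weight (biWeight n m) α
      = (∑ v ∈ α.support, α v * (biWeight n m v).1,
         ∑ v ∈ α.support, α v * (biWeight n m v).2) := by
  rw [Finsupp.weight_apply, Finsupp.sum, Prod.ext_iff]
  constructor
  · rw [Prod.fst_sum]
    exact Finset.sum_congr rfl fun v _ => by simp [Prod.smul_fst, smul_eq_mul]
  · rw [Prod.snd_sum]
    exact Finset.sum_congr rfl fun v _ => by simp [Prod.smul_snd, smul_eq_mul]

lemma single_of_weight10 {α : (Fin (n + 1) ⊕ Fin (m + 1)) →₀ ℕ}
    (h : Finsupp.weight (biWeight n m) α = ((1 : ℕ), (0 : ℕ))) :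
    ∃ i, α = Finsupp.single (Sum.inl i) 1 := by
  rw [weight_coords, Prod.mk.injEq] at h
  obtain ⟨h1, h2⟩ := h
  have hr : ∀ v ∈ α.support, ∃ i, v = Sum.inl i := by
    intro v hv
    rcases v with i | j
    · exact ⟨i, rfl⟩
    · exfalso
      have := (Finset.sum_eq_zero_iff.mp h2) _ hv
      simp [biWeight] at this
      exact Finsupp.mem_support_iff.mp hv this
  have h1' : ∑ v ∈ α.support, α v = 1 :=
    (Finset.sum_congr rfl fun v hv => by
      obtain ⟨i, rfl⟩ := hr v hv; simp [biWeight]).trans h1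
  have hcard : α.support.card ≤ 1 := by
    have : α.support.card ≤ ∑ v ∈ α.support, α v := by
      calc α.support.card = ∑ _v ∈ α.support, 1 := by simp
      _ ≤ ∑ v ∈ α.support, α v :=
        Finset.sum_le_sum fun v hv => Nat.one_le_iff_ne_zero.mpr (Finsupp.mem_support_iff.mp hv)
    exact this.trans_eq h1' 
  have hne : α.support.Nonempty := by
    by_contra hc
    rw [Finset.not_nonempty_iff_eq_empty] at hc
    rw [hc, Finset.sum_empty] at h1'
    exact zero_ne_one h1'
  obtain ⟨v, hv⟩ := Finset.card_eq_one.mp (le_antisymm hcard (Finset.card_pos.mpr hne))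
  have hαv : α v = 1 := by rwa [hv, Finset.sum_singleton] at h1'
  obtain ⟨i, rfl⟩ := hr v (by rw [hv]; exact Finset.mem_singleton_self v)
  refine ⟨i, ?_⟩
  have := (Finsupp.support_eq_singleton.mp hv).2
  rwa [hαv] at this

lemma single_of_weight01 {α : (Fin (n + 1) ⊕ Fin (m + 1)) →₀ ℕ}
    (h : Finsupp.weight (biWeight n m) α = ((0 : ℕ), (1 : ℕ))) :
    ∃ i, α = Finsupp.single (Sum.inr i) 1 := by
  rw [weight_coords, Prod.mk.injEq] at h
  obtain ⟨h1, h2⟩ := h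
  have hr : ∀ v ∈ α.support, ∃ i, v = Sum.inr i := by
    intro v hv
    rcases v with i | j
    · exfalso
      have := (Finset.sum_eq_zero_iff.mp h1) _ hv
      simp [biWeight] at this
      exact Finsupp.mem_support_iff.mp hv this
    · exact ⟨j, rfl⟩
  have h1' : ∑ v ∈ α.support, α v = 1 :=
    (Finset.sum_congr rfl fun v hv => by
      obtain ⟨i, rfl⟩ := hr v hv; simp [biWeight]).trans h2
  have hcard : α.support.card ≤ 1 := by
    have : α.support.card ≤ ∑ v ∈ α.support, α v := by
      calc α.support.card = ∑ _v ∈ α.support, 1 := by simp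
      _ ≤ ∑ v ∈ α.support, α v :=
        Finset.sum_le_sum fun v hv => Nat.one_le_iff_ne_zero.mpr (Finsupp.mem_support_iff.mp hv)
    exact this.trans_eq h1' 
  have hne : α.support.Nonempty := by
    by_contra hc
    rw [Finset.not_nonempty_iff_eq_empty] at hc
    rw [hc, Finset.sum_empty] at h1'
    exact zero_ne_one h1'
  obtain ⟨v, hv⟩ := Finset.card_eq_one.mp (le_antisymm hcard (Finset.card_pos.mpr hne))
  have hαv : α v = 1 := by rwa [hv, Finset.sum_singleton] at h1'
  obtain ⟨i, rfl⟩ := hr v (by rw [hv]; exact Finset.mem_singleton_self v)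
  refine ⟨i, ?_⟩
  have := (Finsupp.support_eq_singleton.mp hv).2
  rwa [hαv] at this

lemma mem_span_X_inl {F : BiRing k n m}
    (h : IsWeightedHomogeneous (biWeight n m) F (1, 0)) :
    F ∈ Submodule.span k (Set.range fun i : Fin (n + 1) => (X (Sum.inl i) : BiRing k n m)) := by
  classical
  rw [F.as_sum]
  apply Submodule.sum_mem
  intro α hα
  obtain ⟨i, rfl⟩ := single_of_weight10 (h (MvPolynomial.mem_support_iff.mp hα))
  have : (monomial (Finsupp.single (Sum.inl i) 1) (coeff (Finsupp.single (Sum.inl i) 1) F)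
      : BiRing k n m) = coeff (Finsupp.single (Sum.inl i) 1) F • X (Sum.inl i) := by
    rw [MvPolynomial.smul_eq_C_mul, MvPolynomial.X, MvPolynomial.C_mul_monomial, mul_one]
  rw [this]
  exact Submodule.smul_mem _ _ (Submodule.subset_span ⟨i, rfl⟩)

lemma mem_span_X_inr {F : BiRing k n m}
    (h : IsWeightedHomogeneous (biWeight n m) F (0, 1)) :
    F ∈ Submodule.span k (Set.range fun i : Fin (m + 1) => (X (Sum.inr i) : BiRing k n m)) := by
  classical
  rw [F.as_sum]
  apply Submodule.sum_mem
  intro α hα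
  obtain ⟨i, rfl⟩ := single_of_weight01 (h (MvPolynomial.mem_support_iff.mp hα))
  have : (monomial (Finsupp.single (Sum.inr i) 1) (coeff (Finsupp.single (Sum.inr i) 1) F)
      : BiRing k n m) = coeff (Finsupp.single (Sum.inr i) 1) F • X (Sum.inr i) := by
    rw [MvPolynomial.smul_eq_C_mul, MvPolynomial.X, MvPolynomial.C_mul_monomial, mul_one]
  rw [this]
  exact Submodule.smul_mem _ _ (Submodule.subset_span ⟨i, rfl⟩)

end Aux
section Aux2

open Finsupp

variable {k : Type} [Field k] {n m : ℕ}

lemma sub_smul_x0_mem {I : Ideal (BiRing k n m)} (hI : IsPointIdeal I)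
    (hx0 : (X (Sum.inl 0) : BiRing k n m) ∉ I) (v : Fin (n + 1)) :
    ∃ c : k, (X (Sum.inl v) : BiRing k n m) - c • X (Sum.inl 0) ∈ I := by
  classical
  obtain ⟨L, L', hL, hL', hind, hspan⟩ := hI
  have hLI : ∀ a, L a ∈ I := fun a => hspan ▸ Ideal.subset_span (Or.inl ⟨a, rfl⟩)
  have hsubI : Submodule.span k (Set.range L) ≤ Submodule.restrictScalars k I := by
    rw [Submodule.span_le]; rintro x ⟨a, rfl⟩; exact hLI a
  have hindL : LinearIndependent k L := by
    have := hind.comp Sum.inl Sum.inl_injective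
    simpa using this
  have hx0span : (X (Sum.inl 0) : BiRing k n m) ∉ Submodule.span k (Set.range L) :=
    fun h => hx0 (hsubI h)
  have hcons : LinearIndependent k (Fin.cons (X (Sum.inl 0) : BiRing k n m) L) :=
    LinearIndependent.fin_cons hindL hx0span
  set V := Submodule.span k (Set.range fun i : Fin (n + 1) => (X (Sum.inl i) : BiRing k n m))
    with hV
  set W := Submodule.span k
    (Set.range (Fin.cons (X (Sum.inl 0)) L : Fin (n + 1) → BiRing k n m)) with hW
  have hWV : W ≤ V := by
    rw [hW, Submodule.span_le]
    rintro x ⟨a, rfl⟩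
    refine Fin.cases ?_ ?_ a
    · exact Submodule.subset_span ⟨0, rfl⟩
    · intro a'
      simp only [Fin.cons_succ]
      exact mem_span_X_inl (hL a')
  haveI : FiniteDimensional k V := FiniteDimensional.span_of_finite k (Set.finite_range _)
  have hVle : Module.finrank k V ≤ n + 1 := by
    refine (finrank_span_le_card _).trans ?_
    rw [Set.toFinset_card]
    exact (Fintype.card_range_le _).trans (by simp)
  have hWrank : Module.finrank k W = n + 1 := by
    rw [hW, finrank_span_eq_card hcons, Fintype.card_fin]
  have hEq : W = V := Submodule.eq_of_le_of_finrank_le hWV (by rw [hWrank]; exact hVle)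
  have hmem : (X (Sum.inl v) : BiRing k n m) ∈ W := by
    rw [hEq]; exact Submodule.subset_span ⟨v, rfl⟩
  rw [hW, Fin.range_cons, Submodule.mem_span_insert] at hmem
  obtain ⟨c, z, hz, hzz⟩ := hmem
  exact ⟨c, by rw [hzz]; simpa using hsubI hz⟩

lemma sub_smul_y0_mem {I : Ideal (BiRing k n m)} (hI : IsPointIdeal I)
    (hy0 : (X (Sum.inr 0) : BiRing k n m) ∉ I) (v : Fin (m + 1)) :
    ∃ c : k, (X (Sum.inr v) : BiRing k n m) - c • X (Sum.inr 0) ∈ I := by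
  classical
  obtain ⟨L, L', hL, hL', hind, hspan⟩ := hI
  have hLI : ∀ a, L' a ∈ I := fun a => hspan ▸ Ideal.subset_span (Or.inr ⟨a, rfl⟩)
  have hsubI : Submodule.span k (Set.range L') ≤ Submodule.restrictScalars k I := by
    rw [Submodule.span_le]; rintro x ⟨a, rfl⟩; exact hLI a
  have hindL : LinearIndependent k L' := by
    have := hind.comp Sum.inr Sum.inr_injective
    simpa using this
  have hy0span : (X (Sum.inr 0) : BiRing k n m) ∉ Submodule.span k (Set.range L') :=
    fun h => hy0 (hsubI h)
  have hcons : LinearIndependent k (Fin.cons (X (Sum.inr 0) : BiRing k n m) L') :=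
    LinearIndependent.fin_cons hindL hy0span
  set V := Submodule.span k (Set.range fun i : Fin (m + 1) => (X (Sum.inr i) : BiRing k n m))
    with hV
  set W := Submodule.span k
    (Set.range (Fin.cons (X (Sum.inr 0)) L' : Fin (m + 1) → BiRing k n m)) with hW
  have hWV : W ≤ V := by
    rw [hW, Submodule.span_le]
    rintro x ⟨a, rfl⟩
    refine Fin.cases ?_ ?_ a
    · exact Submodule.subset_span ⟨0, rfl⟩
    · intro a'
      simp only [Fin.cons_succ]
      exact mem_span_X_inr (hL' a')
  haveI : FiniteDimensional k V := FiniteDimensional.span_of_finite k (Set.finite_range _)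
  have hVle : Module.finrank k V ≤ m + 1 := by
    refine (finrank_span_le_card _).trans ?_
    rw [Set.toFinset_card]
    exact (Fintype.card_range_le _).trans (by simp)
  have hWrank : Module.finrank k W = m + 1 := by
    rw [hW, finrank_span_eq_card hcons, Fintype.card_fin]
  have hEq : W = V := Submodule.eq_of_le_of_finrank_le hWV (by rw [hWrank]; exact hVle)
  have hmem : (X (Sum.inr v) : BiRing k n m) ∈ W := by
    rw [hEq]; exact Submodule.subset_span ⟨v, rfl⟩
  rw [hW, Fin.range_cons, Submodule.mem_span_insert] at hmem
  obtain ⟨c, z, hz, hzz⟩ := hmem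
  exact ⟨c, by rw [hzz]; simpa using hsubI hz⟩

end Aux2
section Aux3

open Finsupp

variable {k : Type} [Field k] {n m : ℕ}

lemma homog_congr_x0y0 {I : Ideal (BiRing k n m)}
    (hxv : ∀ v, ∃ c : k, (X (Sum.inl v) : BiRing k n m) - c • X (Sum.inl 0) ∈ I)
    (hyv : ∀ v, ∃ c : k, (X (Sum.inr v) : BiRing k n m) - c • X (Sum.inr 0) ∈ I)
    {A : BiRing k n m} {u : ℕ × ℕ} (hA : IsWeightedHomogeneous (biWeight n m) A u) :
    ∃ c : k, A - c • (X (Sum.inl 0) ^ u.1 * X (Sum.inr 0) ^ u.2) ∈ I := by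
  classical
  set σ := Fin (n + 1) ⊕ Fin (m + 1)
  set φ := Ideal.Quotient.mk I with hφ
  -- pick the scalars εv and the "root variable" for each variable
  choose εx hεx using hxv
  choose εy hεy using hyv
  set ε : σ → k := Sum.elim εx εy with hε
  set Xr : σ → BiRing k n m := Sum.elim (fun _ => X (Sum.inl 0)) (fun _ => X (Sum.inr 0))
    with hXr
  have hXv : ∀ v : σ, φ (X v) = φ (C (ε v)) * φ (Xr v) := by
    intro v
    rw [← map_mul, ← MvPolynomial.smul_eq_C_mul]
    rcases v with a | b
    · exact (Ideal.Quotient.eq).mpr (hεx a)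
    · exact (Ideal.Quotient.eq).mpr (hεy b)
  -- the per-monomial computation
  have key : ∀ α : (Fin (n + 1) ⊕ Fin (m + 1)) →₀ ℕ, ∃ c : k,
      Finsupp.weight (biWeight n m) α = u →
      φ (monomial α (coeff α A)) = φ (C c * (X (Sum.inl 0) ^ u.1 * X (Sum.inr 0) ^ u.2)) := by
    intro α
    refine ⟨coeff α A * ∏ v ∈ α.support, ε v ^ α v, fun hu => ?_⟩
    rw [MvPolynomial.monomial_eq]
    rw [Finsupp.prod]
    rw [map_mul, map_prod]
    have step1 : ∀ v ∈ α.support, φ (X v ^ α v)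
        = φ (C (ε v)) ^ α v * (φ (X (Sum.inl 0)) ^ (α v * (biWeight n m v).1)
            * φ (X (Sum.inr 0)) ^ (α v * (biWeight n m v).2)) := by
      intro v _
      rw [map_pow, hXv v, mul_pow]
      congr 1
      rcases v with a | b
      · simp [hXr, biWeight]
      · simp [hXr, biWeight]
    rw [Finset.prod_congr rfl step1, Finset.prod_mul_distrib, Finset.prod_mul_distrib,
      Finset.prod_pow_eq_pow_sum, Finset.prod_pow_eq_pow_sum]
    have hw := weight_coords (n := n) (m := m) α
    rw [hu] at hw
    have hw1 : ∑ v ∈ α.support, α v * (biWeight n m v).1 = u.1 := by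
      rw [← (Prod.mk.injEq _ _ _ _).mp hw.symm |>.1]
    have hw2 : ∑ v ∈ α.support, α v * (biWeight n m v).2 = u.2 := by
      rw [← (Prod.mk.injEq _ _ _ _).mp hw.symm |>.2]
    rw [hw1, hw2]
    have hCprod : (∏ x ∈ α.support, φ (C (ε x)) ^ α x)
        = φ (C (∏ v ∈ α.support, ε v ^ α v)) := by
      rw [map_prod, map_prod]
      exact Finset.prod_congr rfl fun v _ => by rw [← map_pow, ← map_pow]
    rw [hCprod, map_mul φ, map_mul φ, map_pow, map_pow]
    simp only [map_mul]
    ring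
  choose cf hcf using key
  refine ⟨∑ α ∈ A.support, cf α, ?_⟩
  rw [← Ideal.Quotient.eq_zero_iff_mem, map_sub, sub_eq_zero, MvPolynomial.smul_eq_C_mul]
  conv_lhs => rw [A.as_sum]
  rw [map_sum]
  rw [Finset.sum_congr rfl fun α hα => hcf α (hA (MvPolynomial.mem_support_iff.mp hα))]
  rw [← map_sum, ← Finset.sum_mul, ← map_sum (C : k →+* BiRing k n m)]

end Aux3
section Aux4

open Finsupp

variable {k : Type} [Field k] {n m : ℕ}

lemma isWeightedHomogeneous_pow {φ : BiRing k n m} {a : ℕ × ℕ}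
    (h : IsWeightedHomogeneous (biWeight n m) φ a) (e : ℕ) :
    IsWeightedHomogeneous (biWeight n m) (φ ^ e) (e • a) := by
  induction e with
  | zero => simpa [pow_zero, zero_smul] using isWeightedHomogeneous_one k (biWeight n m)
  | succ e ih =>
    rw [pow_succ, succ_nsmul]
    exact ih.mul h

lemma component_mul_homog (t e : ℕ × ℕ) (F : BiRing k n m)
    (hF : IsWeightedHomogeneous (biWeight n m) F e) (A : BiRing k n m) :
    weightedHomogeneousComponent (biWeight n m) t (A * F)
      = if e.1 ≤ t.1 ∧ e.2 ≤ t.2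
        then weightedHomogeneousComponent (biWeight n m) (t.1 - e.1, t.2 - e.2) A * F
        else 0 := by
  classical
  induction A using MvPolynomial.induction_on' with
  | add p q hp hq =>
    rw [add_mul, map_add, hp, hq, map_add, add_mul]
    split_ifs <;> simp
  | monomial α r =>
    have hM : IsWeightedHomogeneous (biWeight n m) (monomial α r : BiRing k n m)
        (Finsupp.weight (biWeight n m) α) := isWeightedHomogeneous_monomial _ _ _ rfl
    have hMF : IsWeightedHomogeneous (biWeight n m) ((monomial α r : BiRing k n m) * F)
        (Finsupp.weight (biWeight n m) α + e) := hM.mul hF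
    set wα := Finsupp.weight (biWeight n m) α with hwα
    by_cases h : e.1 ≤ t.1 ∧ e.2 ≤ t.2
    · rw [if_pos h]
      by_cases ht : t = wα + e
      · subst ht
        have h1 : ((wα + e).1 - e.1, (wα + e).2 - e.2) = wα := Prod.ext (by simp) (by simp)
        rw [IsWeightedHomogeneous.weightedHomogeneousComponent_same hMF, h1,
          IsWeightedHomogeneous.weightedHomogeneousComponent_same hM]
      · have h1 : (t.1 - e.1, t.2 - e.2) ≠ wα := by
          intro hc
          apply ht
          have : t = (t.1 - e.1 + e.1, t.2 - e.2 + e.2) := by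
            exact Prod.ext (by omega) (by omega)
          rw [this, ← hc]
          exact Prod.ext rfl rfl
        rw [IsWeightedHomogeneous.weightedHomogeneousComponent_ne _ hMF ht,
          IsWeightedHomogeneous.weightedHomogeneousComponent_ne _ hM h1, zero_mul]
    · rw [if_neg h]
      have ht : t ≠ wα + e := by
        intro hc
        apply h
        constructor
        · have : t.1 = wα.1 + e.1 := by rw [hc]; rfl
          omega
        · have : t.2 = wα.2 + e.2 := by rw [hc]; rfl
          omega
      exact IsWeightedHomogeneous.weightedHomogeneousComponent_ne _ hMF ht

lemma decompose_coe (x : BiRing k n m) (u : ℕ × ℕ) :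
    ((DirectSum.decompose (weightedHomogeneousSubmodule k (biWeight n m)) x u :
        weightedHomogeneousSubmodule k (biWeight n m) u) : BiRing k n m)
      = weightedHomogeneousComponent (biWeight n m) u x :=
  MvPolynomial.decompose'_apply k (biWeight n m) x u

lemma pointIdeal_isHomogeneous {I : Ideal (BiRing k n m)} (hI : IsPointIdeal I) :
    I.IsHomogeneous (weightedHomogeneousSubmodule k (biWeight n m)) := by
  obtain ⟨L, L', hL, hL', -, rfl⟩ := hI
  apply Ideal.homogeneous_span
  rintro x (⟨a, rfl⟩ | ⟨b, rfl⟩)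
  · exact ⟨(1, 0), hL a⟩
  · exact ⟨(0, 1), hL' b⟩

lemma isHomog_pow {I : Ideal (BiRing k n m)}
    (h : I.IsHomogeneous (weightedHomogeneousSubmodule k (biWeight n m))) (e : ℕ) :
    (I ^ e).IsHomogeneous (weightedHomogeneousSubmodule k (biWeight n m)) := by
  induction e with
  | zero =>
    simpa [pow_zero] using
      Ideal.IsHomogeneous.top (𝒜 := weightedHomogeneousSubmodule k (biWeight n m))
  | succ e ih => rw [pow_succ]; exact ih.mul h

lemma fatIdeal_isHomogeneous {s : ℕ} {P : Fin s → Ideal (BiRing k n m)}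
    (hP : ∀ j, IsPointIdeal (P j)) (mult : Fin s → ℕ) :
    (fatIdeal P mult).IsHomogeneous (weightedHomogeneousSubmodule k (biWeight n m)) :=
  Ideal.IsHomogeneous.iInf fun j => isHomog_pow (pointIdeal_isHomogeneous (hP j)) (mult j)

lemma homog_component_mem {I : Ideal (BiRing k n m)}
    (hI : I.IsHomogeneous (weightedHomogeneousSubmodule k (biWeight n m)))
    {x : BiRing k n m} (hx : x ∈ I) (u : ℕ × ℕ) :
    weightedHomogeneousComponent (biWeight n m) u x ∈ I := by
  have := hI u hx
  rwa [decompose_coe] at this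

lemma mul_sep_mem {s : ℕ} {P : Fin s → Ideal (BiRing k n m)} {mult : Fin s → ℕ}
    (hmult : ∀ j, 1 ≤ mult j) (i : Fin s) {b f : BiRing k n m} (hb : b ∈ P i)
    (hf : f ∈ fatIdeal P (Function.update mult i (mult i - 1))) :
    b * f ∈ fatIdeal P mult := by
  rw [fatIdeal, Ideal.mem_iInf] at hf ⊢
  intro j
  by_cases hj : j = i
  · subst hj
    have hf' := hf j
    rw [Function.update_self] at hf'
    have hmj : mult j = (mult j - 1) + 1 := (Nat.succ_pred_eq_of_pos (hmult j)).symm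
    rw [hmj, pow_succ]
    exact mul_comm b f ▸ Ideal.mul_mem_mul hf' hb
  · have hf' := hf j
    rw [Function.update_of_ne hj] at hf'
    exact Ideal.mul_mem_left _ b hf'

end Aux4

/-- Theorem 4.3(ii): if `{F₁,…,F_p}` is a good set of minimal
separators with degrees `d j`, then for every `t ∈ ℕ²`,
`dim_k (I_{Z'}/I_Z)_t = #{j : d j ⪯ t}`.  The graded piece `(I_{Z'}/I_Z)_t` is
realized as the image in `R/I_Z` of the space of bihomogeneous elements of
degree `t` of `I_{Z'}`. -/
theorem stmt6 [IsAlgClosed k] [CharZero k] {s : ℕ}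
    (P : Fin s → Ideal (BiRing k n m)) (mult : Fin s → ℕ)
    (hP : ∀ j, IsPointIdeal (P j)) (hinj : Function.Injective P)
    (hmult : ∀ j, 1 ≤ mult j) (i : Fin s)
    (IZ IZ' : Ideal (BiRing k n m))
    (hIZ : IZ = fatIdeal P mult)
    (hIZ' : IZ' = fatIdeal P (Function.update mult i (mult i - 1)))
    (hx : ∀ g : BiRing k n m, X (Sum.inl 0) * g ∈ IZ → g ∈ IZ)
    (hy : ∀ g : BiRing k n m, X (Sum.inr 0) * g ∈ IZ → g ∈ IZ)
    (hx' : ∀ g : BiRing k n m, X (Sum.inl 0) * g ∈ IZ' → g ∈ IZ')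
    (hy' : ∀ g : BiRing k n m, X (Sum.inr 0) * g ∈ IZ' → g ∈ IZ')
    {p : ℕ} (F : Fin p → BiRing k n m) (d : Fin p → ℕ × ℕ)
    (hdeg : ∀ j, BihomOfDeg (F j) (d j))
    (hmin : IsMinSepSet IZ IZ' F)
    (hgood : IsGoodSepSet IZ F d) :
    ∀ t : ℕ × ℕ,
      Module.finrank k
        (Submodule.map (Ideal.Quotient.mkₐ k IZ).toLinearMap
          (weightedHomogeneousSubmodule k (biWeight n m) t ⊓
            Submodule.restrictScalars k IZ')) =
      (Finset.univ.filter (fun j => (d j).1 ≤ t.1 ∧ (d j).2 ≤ t.2)).card := by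
  classical
  intro t
  set T := Finset.univ.filter (fun j : Fin p => (d j).1 ≤ t.1 ∧ (d j).2 ≤ t.2) with hT
  set v : Fin p → BiRing k n m := fun j =>
    X (Sum.inl 0) ^ (t.1 - (d j).1) * X (Sum.inr 0) ^ (t.2 - (d j).2) * F j with hv
  set π := (Ideal.Quotient.mkₐ k IZ).toLinearMap with hπ
  set G : {j // j ∈ T} → (BiRing k n m ⧸ IZ) := fun j => π (v j) with hG
  have hπ0 : ∀ x ∈ IZ, π x = 0 := fun x hxx => by
    simp only [hπ, AlgHom.toLinearMap_apply, Ideal.Quotient.mkₐ_eq_mk]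
    exact Ideal.Quotient.eq_zero_iff_mem.mpr hxx
  have hπ0' : ∀ x : BiRing k n m, π x = 0 → x ∈ IZ := fun x hxx => by
    simp only [hπ, AlgHom.toLinearMap_apply, Ideal.Quotient.mkₐ_eq_mk] at hxx
    exact Ideal.Quotient.eq_zero_iff_mem.mp hxx
  have hIZhom : IZ.IsHomogeneous (weightedHomogeneousSubmodule k (biWeight n m)) :=
    hIZ ▸ fatIdeal_isHomogeneous hP mult
  have hPmul : ∀ {b f : BiRing k n m}, b ∈ P i → f ∈ IZ' → b * f ∈ IZ := by
    intro b f hb hf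
    rw [hIZ]
    exact mul_sep_mem hmult i hb (hIZ' ▸ hf)
  have hFIZ' : ∀ j, F j ∈ IZ' := fun j => (hmin.1 j).2.1
  have hFnotIZ : ∀ j, F j ∉ IZ := fun j => (hmin.1 j).2.2
  have hvhom : ∀ j : Fin p, j ∈ T →
      v j ∈ weightedHomogeneousSubmodule k (biWeight n m) t := by
    intro j hj
    rw [hT, Finset.mem_filter] at hj
    rw [mem_weightedHomogeneousSubmodule]
    have h1 := isWeightedHomogeneous_pow
      (isWeightedHomogeneous_X k (biWeight n m) (Sum.inl 0)) (t.1 - (d j).1)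
    have h2 := isWeightedHomogeneous_pow
      (isWeightedHomogeneous_X k (biWeight n m) (Sum.inr 0)) (t.2 - (d j).2)
    have h3 := (h1.mul h2).mul (hdeg j)
    have heq : ((t.1 - (d j).1) • biWeight n m (Sum.inl 0)
        + (t.2 - (d j).2) • biWeight n m (Sum.inr 0)) + d j = t := by
      have e1 : biWeight n m (Sum.inl (0 : Fin (n + 1))) = (1, 0) := rfl
      have e2 : biWeight n m (Sum.inr (0 : Fin (m + 1))) = (0, 1) := rfl
      rw [e1, e2]
      refine Prod.ext ?_ ?_ <;>
        simp only [Prod.fst_add, Prod.snd_add, Prod.smul_fst, Prod.smul_snd,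
          smul_eq_mul, mul_one, mul_zero, add_zero, zero_add] <;> omega
    rw [← heq]
    exact h3
  -- the image submodule is spanned by the classes of the `v j`, `j ∈ T`
  have hspan : Submodule.map π (weightedHomogeneousSubmodule k (biWeight n m) t ⊓
      Submodule.restrictScalars k IZ') = Submodule.span k (Set.range G) := by
    apply le_antisymm
    · rintro x ⟨H, ⟨hH1, hH2⟩, rfl⟩
      have hH1' : IsWeightedHomogeneous (biWeight n m) H t :=
        (mem_weightedHomogeneousSubmodule _ _ _ _).mp hH1
      have hsup : H ∈ IZ ⊔ Ideal.span (Set.range F) := hmin.2.1.symm ▸ hH2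
      obtain ⟨g, hg, r, hr, hgr⟩ := Submodule.mem_sup.mp hsup
      obtain ⟨A, hA⟩ := Ideal.mem_span_range_iff_exists_fun.mp hr
      have hH : H = weightedHomogeneousComponent (biWeight n m) t H :=
        (IsWeightedHomogeneous.weightedHomogeneousComponent_same hH1').symm
      have hdecomp : weightedHomogeneousComponent (biWeight n m) t H
          = weightedHomogeneousComponent (biWeight n m) t g
            + ∑ j, weightedHomogeneousComponent (biWeight n m) t (A j * F j) := by
        conv_lhs => rw [← hgr, ← hA]
        rw [map_add, map_sum]
      rw [hH, hdecomp, map_add, map_sum]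
      apply Submodule.add_mem
      · rw [hπ0 _ (homog_component_mem hIZhom hg t)]
        exact Submodule.zero_mem _
      · apply Submodule.sum_mem
        intro j _
        rw [component_mul_homog t (d j) (F j) (hdeg j) (A j)]
        by_cases hcnd : (d j).1 ≤ t.1 ∧ (d j).2 ≤ t.2
        · rw [if_pos hcnd]
          set A' := weightedHomogeneousComponent (biWeight n m)
            (t.1 - (d j).1, t.2 - (d j).2) (A j) with hA'
          have hA'h : IsWeightedHomogeneous (biWeight n m) A'
              (t.1 - (d j).1, t.2 - (d j).2) :=
            weightedHomogeneousComponent_isWeightedHomogeneous _ _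
          have hx0 : (X (Sum.inl 0) : BiRing k n m) ∉ P i := fun hmem =>
            hFnotIZ j (hx _ (hPmul hmem (hFIZ' j)))
          have hy0 : (X (Sum.inr 0) : BiRing k n m) ∉ P i := fun hmem =>
            hFnotIZ j (hy _ (hPmul hmem (hFIZ' j)))
          obtain ⟨c, hc'⟩ := homog_congr_x0y0 (sub_smul_x0_mem (hP i) hx0)
            (sub_smul_y0_mem (hP i) hy0) hA'h
          have hz : π ((A' - c • (X (Sum.inl 0) ^ (t.1 - (d j).1, t.2 - (d j).2).1
              * X (Sum.inr 0) ^ (t.1 - (d j).1, t.2 - (d j).2).2)) * F j) = 0 :=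
            hπ0 _ (hPmul hc' (hFIZ' j))
          have hveq : (A' - c • (X (Sum.inl 0) ^ (t.1 - (d j).1, t.2 - (d j).2).1
              * X (Sum.inr 0) ^ (t.1 - (d j).1, t.2 - (d j).2).2)) * F j
              = A' * F j - c • v j := by
            rw [sub_mul, smul_mul_assoc]
          rw [hveq, map_sub, map_smul, sub_eq_zero] at hz
          rw [hz]
          have hjT : j ∈ T := by
            rw [hT, Finset.mem_filter]
            exact ⟨Finset.mem_univ j, hcnd⟩
          exact Submodule.smul_mem _ _ (Submodule.subset_span ⟨⟨j, hjT⟩, rfl⟩)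
        · rw [if_neg hcnd, map_zero]
          exact Submodule.zero_mem _
    · rw [Submodule.span_le]
      rintro x ⟨j, rfl⟩
      refine ⟨v j, ⟨hvhom j j.2, ?_⟩, rfl⟩
      exact Ideal.mul_mem_left IZ' _ (hFIZ' j.1)
  have hind : LinearIndependent k G := by
    rw [Fintype.linearIndependent_iff]
    intro g hg
    set c : Fin p → k := fun j => if h : j ∈ T then g ⟨j, h⟩ else 0 with hc
    have hsum : π (∑ j ∈ T, c j • v j) = ∑ j : {j // j ∈ T}, g j • G j := by
      rw [map_sum]
      rw [← Finset.sum_coe_sort T (fun j => π (c j • v j))]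
      refine Finset.sum_congr rfl fun j _ => ?_
      rw [map_smul]
      congr 1
      rw [hc]
      exact dif_pos j.2
    rw [hg] at hsum
    have hmem : (∑ j ∈ T, c j • v j) ∈ IZ := hπ0' _ hsum
    intro i0
    have := hgood t c hmem i0.1 (Finset.mem_filter.mp i0.2).2.1
      (Finset.mem_filter.mp i0.2).2.2
    rw [hc] at this
    simpa [dif_pos i0.2] using this
  rw [hspan, finrank_span_eq_card hind, Fintype.card_coe]
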